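/- Let d ≥ 1, σ > 0, let F : ℝ^d → ℝ be measurable, let y ∈ ℝ, and for δ ∈ ℝ^d define h(δ) := P_{ζ ~ N(0, σ²I_d)}[F(δ + ζ) ≤ y]. Let B ≥ 0 and let δ ∈ ℝ^d satisfy ‖δ‖₂ ≤ B. If 0 < h(0) < 1 and 0 < h(δ) < 1, then Φ⁻¹(h(δ)) ≤ Φ⁻¹(h(0)) + B/σ; equivalently, P[F(δ + ζ) ≤ y] ≤ Φ(Φ⁻¹(P[F(ζ) ≤ y]) + B/σ). -/

import Mathlib

open MeasureTheory ProbabilityTheory Real Set Filter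
open scoped NNReal ENNReal

/-- The centered Gaussian product measure `N(0, σ² I)` on Euclidean space. -/
noncomputable def gaussPi (ι : Type*) [Fintype ι] (σ : ℝ) :
    Measure (EuclideanSpace ℝ ι) :=
  (Measure.pi fun _ : ι => gaussianReal 0 ⟨σ ^ 2, sq_nonneg σ⟩).map
    (MeasurableEquiv.toLp 2 (ι → ℝ))

/-- The cumulative distribution function `Φ` of the standard one-dimensional Gaussian. -/
noncomputable def stdGaussianCDF (x : ℝ) : ℝ :=
  (gaussianReal 0 1 (Set.Iic x)).toReal

/-- The inverse `Φ⁻¹` of the standard Gaussian CDF (on `(0,1)`). -/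
noncomputable def probit : ℝ → ℝ :=
  Function.invFun stdGaussianCDF

lemma gaussianReal_singleton (m : ℝ) {v : ℝ≥0} (hv : v ≠ 0) (a : ℝ) :
    gaussianReal m v {a} = 0 := by
  rw [gaussianReal_apply _ hv, Measure.restrict_eq_zero.mpr (volume_singleton),
    lintegral_zero_measure]

lemma stdG_toReal_Ioc {a b : ℝ} (hab : a ≤ b) :
    (gaussianReal 0 1 (Set.Ioc a b)).toReal = ∫ t in a..b, gaussianPDFReal 0 1 t := by
  rw [gaussianReal_apply_eq_integral 0 one_ne_zero, ENNReal.toReal_ofReal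
    (setIntegral_nonneg measurableSet_Ioc fun x _ => gaussianPDFReal_nonneg _ _ _),
    intervalIntegral.integral_of_le hab]

lemma stdGaussianCDF_sub {a b : ℝ} (hab : a ≤ b) :
    stdGaussianCDF b - stdGaussianCDF a = ∫ t in a..b, gaussianPDFReal 0 1 t := by
  have h1 : Set.Iic b = Set.Iic a ∪ Set.Ioc a b := (Set.Iic_union_Ioc_eq_Iic hab).symm
  have h2 : Disjoint (Set.Iic a) (Set.Ioc a b) := by
    simp [Set.disjoint_left]
    intro x hx h; linarith
  rw [← stdG_toReal_Ioc hab]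
  unfold stdGaussianCDF
  rw [h1, measure_union h2 measurableSet_Ioc,
    ENNReal.toReal_add (measure_ne_top _ _) (measure_ne_top _ _)]
  ring

lemma continuous_stdGaussianCDF : Continuous stdGaussianCDF := by
  have key : ∀ x, stdGaussianCDF x
      = stdGaussianCDF 0 + ∫ t in (0:ℝ)..x, gaussianPDFReal 0 1 t := by
    intro x
    rcases le_total 0 x with hx | hx
    · rw [← stdGaussianCDF_sub hx]; ring
    · rw [intervalIntegral.integral_symm, ← stdGaussianCDF_sub hx]; ring
  have : Continuous fun x => stdGaussianCDF 0 + ∫ t in (0:ℝ)..x, gaussianPDFReal 0 1 t := by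
    refine continuous_const.add ?_
    exact intervalIntegral.continuous_primitive
      (fun a b => (integrable_gaussianPDFReal 0 1).intervalIntegrable) 0
  exact this.congr fun x => (key x).symm

lemma strictMono_stdGaussianCDF : StrictMono stdGaussianCDF := by
  intro a b hab
  have h : 0 < ∫ t in a..b, gaussianPDFReal 0 1 t := by
    rw [intervalIntegral.integral_of_le hab.le]
    rw [setIntegral_pos_iff_support_of_nonneg_ae
      (ae_of_all _ fun x => gaussianPDFReal_nonneg 0 1 x)
      (integrable_gaussianPDFReal 0 1).integrableOn]
    have : Function.support (gaussianPDFReal 0 1) = Set.univ := by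
      ext x; simp [Function.mem_support, (gaussianPDFReal_pos 0 1 x one_ne_zero).ne']
    rw [this, Set.univ_inter, Real.volume_Ioc]
    simp [hab]
  have := stdGaussianCDF_sub hab.le
  linarith

lemma monotone_stdGaussianCDF : Monotone stdGaussianCDF :=
  strictMono_stdGaussianCDF.monotone

lemma stdGaussianCDF_tendsto_atTop :
    Tendsto stdGaussianCDF atTop (nhds 1) := by
  have h := tendsto_measure_Iic_atTop (gaussianReal 0 1)
  rw [measure_univ] at h
  have := (ENNReal.tendsto_toReal (by norm_num : (1:ℝ≥0∞) ≠ ⊤)).comp h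
  rw [ENNReal.toReal_one] at this
  exact this

lemma stdGaussianCDF_lt_one (x : ℝ) : stdGaussianCDF x < 1 := by
  have hx : stdGaussianCDF x < stdGaussianCDF (x+1) := strictMono_stdGaussianCDF (by linarith)
  have : stdGaussianCDF (x+1) ≤ 1 := by
    unfold stdGaussianCDF
    rw [← ENNReal.toReal_one]
    exact ENNReal.toReal_mono (by norm_num) prob_le_one
  linarith

lemma stdGaussianCDF_tendsto_atBot :
    Tendsto stdGaussianCDF atBot (nhds 0) := by
  have key : ∀ x, stdGaussianCDF x = 1 - (gaussianReal 0 1 (Set.Ici x)).toReal := by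
    intro x
    have h1 : gaussianReal 0 1 (Set.Ici x) = gaussianReal 0 1 (Set.Ioi x) := by
      rw [← Set.Ioi_union_left, measure_union _ (measurableSet_singleton x)]
      · rw [gaussianReal_singleton 0 one_ne_zero, add_zero]
      · simp [Set.disjoint_left]; intro a ha; exact ne_of_gt ha
    have h2 : gaussianReal 0 1 (Set.Iic x) + gaussianReal 0 1 (Set.Ioi x) = 1 := by
      rw [← measure_union (by simp [Set.disjoint_left])
        measurableSet_Ioi, Set.Iic_union_Ioi, measure_univ]
    unfold stdGaussianCDF
    rw [h1]
    have h3 := ENNReal.toReal_add (measure_ne_top (gaussianReal 0 1) (Set.Iic x))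
      (measure_ne_top (gaussianReal 0 1) (Set.Ioi x))
    rw [h2] at h3
    simp at h3
    linarith
  have h := tendsto_measure_Ici_atBot (gaussianReal 0 1)
  rw [measure_univ] at h
  have h' := (ENNReal.tendsto_toReal (by norm_num : (1:ℝ≥0∞) ≠ ⊤)).comp h
  simp only [Function.comp_def, ENNReal.toReal_one] at h'
  have : Tendsto (fun x => 1 - (gaussianReal 0 1 (Set.Ici x)).toReal) atBot (nhds (1 - 1)) :=
    tendsto_const_nhds.sub h'
  simp only [sub_self] at this
  exact this.congr fun x => (key x).symm

lemma stdGaussianCDF_surj {p : ℝ} (hp0 : 0 < p) (hp1 : p < 1) :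
    ∃ x, stdGaussianCDF x = p := by
  obtain ⟨a, ha⟩ : ∃ a, stdGaussianCDF a < p := by
    have := stdGaussianCDF_tendsto_atBot.eventually (eventually_lt_nhds hp0)
    exact this.exists
  obtain ⟨b, hb⟩ : ∃ b, p < stdGaussianCDF b := by
    have := stdGaussianCDF_tendsto_atTop.eventually (eventually_gt_nhds hp1)
    exact this.exists
  have hab : a ≤ b := by
    by_contra hc
    exact absurd (monotone_stdGaussianCDF (le_of_not_ge hc)) (by linarith)
  have := intermediate_value_Icc hab continuous_stdGaussianCDF.continuousOn
  obtain ⟨x, _, hx⟩ := this ⟨ha.le, hb.le⟩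
  exact ⟨x, hx⟩

lemma lintegral_pi_prod {n : ℕ} (μ : Fin n → Measure ℝ) [∀ i, SigmaFinite (μ i)]
    (f : Fin n → ℝ → ℝ≥0∞) (hf : ∀ i, Measurable (f i)) :
    ∫⁻ x : Fin n → ℝ, ∏ i, f i (x i) ∂(Measure.pi μ) = ∏ i, ∫⁻ x, f i x ∂(μ i) := by
  induction n with
  | zero => simp
  | succ n ih =>
    have hmp := (measurePreserving_piFinSuccAbove μ 0).symm
    have hg : Measurable fun x : Fin (n+1) → ℝ => ∏ i, f i (x i) :=
      Finset.measurable_prod _ fun i _ => (hf i).comp (measurable_pi_apply i)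
    calc
      ∫⁻ x : Fin (n+1) → ℝ, ∏ i, f i (x i) ∂(Measure.pi μ)
          = ∫⁻ p : ℝ × (Fin n → ℝ),
              (fun x : Fin (n+1) → ℝ => ∏ i, f i (x i))
                ((MeasurableEquiv.piFinSuccAbove (fun _ => ℝ) 0).symm p)
            ∂((μ 0).prod (Measure.pi fun i => μ (Fin.succAbove 0 i))) :=
        (hmp.lintegral_comp hg).symm
      _ = ∫⁻ p : ℝ × (Fin n → ℝ), f 0 p.1 *
              ((fun x2 : Fin n → ℝ => ∏ i : Fin n, f i.succ (x2 i)) p.2)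
            ∂((μ 0).prod (Measure.pi fun i => μ (Fin.succAbove 0 i))) := by
        refine lintegral_congr fun p => ?_
        simp [MeasurableEquiv.piFinSuccAbove_symm_apply, Fin.insertNthEquiv,
          Fin.prod_univ_succ, Fin.insertNth_zero, Fin.zero_succAbove]
      _ = (∫⁻ x, f 0 x ∂(μ 0)) * ∫⁻ x2 : Fin n → ℝ, ∏ i : Fin n, f i.succ (x2 i)
            ∂(Measure.pi fun i => μ (Fin.succAbove 0 i)) :=
        lintegral_prod_mul (hf 0).aemeasurable
          (Finset.measurable_prod Finset.univ fun (i : Fin n) _ =>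
            ((hf i.succ).comp (measurable_pi_apply i))).aemeasurable
      _ = ∏ i, ∫⁻ x, f i x ∂(μ i) := by
        rw [ih (fun i => μ (Fin.succAbove 0 i)) (fun i => f i.succ) (fun i => hf i.succ),
          Fin.prod_univ_succ]
        simp [Fin.zero_succAbove]

lemma pi_withDensity {n : ℕ} (μ : Fin n → Measure ℝ) [∀ i, SigmaFinite (μ i)]
    (f : Fin n → ℝ → ℝ≥0∞) (hf : ∀ i, Measurable (f i))
    [∀ i, SigmaFinite ((μ i).withDensity (f i))] :
    Measure.pi (fun i => (μ i).withDensity (f i))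
      = (Measure.pi μ).withDensity (fun x => ∏ i, f i (x i)) := by
  refine (Measure.pi_eq fun s hs => ?_)
  rw [withDensity_apply _ (MeasurableSet.univ_pi hs)]
  have : ∀ x : Fin n → ℝ, (Set.univ.pi s).indicator (fun x => ∏ i, f i (x i)) x
      = ∏ i, (s i).indicator (f i) (x i) := by
    intro x
    by_cases hx : x ∈ Set.univ.pi s
    · rw [Set.indicator_of_mem hx]
      exact Finset.prod_congr rfl fun i _ =>
        (Set.indicator_of_mem (hx i (Set.mem_univ i)) _).symm
    · rw [Set.indicator_of_notMem hx]
      simp only [Set.mem_pi, Set.mem_univ, forall_true_left, not_forall] at hx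
      obtain ⟨i, hi⟩ := hx
      exact (Finset.prod_eq_zero (Finset.mem_univ i)
        (by rw [Set.indicator_of_notMem hi])).symm
  rw [← lintegral_indicator (MeasurableSet.univ_pi hs)]
  simp_rw [this]
  rw [lintegral_pi_prod μ _ (fun i => (hf i).indicator (hs i))]
  exact Finset.prod_congr rfl fun i _ => by
    rw [lintegral_indicator (hs i), ← withDensity_apply _ (hs i)]

lemma gaussianReal_tilt (m : ℝ) {v : ℝ≥0} (hv : v ≠ 0) :
    gaussianReal m v = (gaussianReal 0 v).withDensity
      (fun x => ENNReal.ofReal (rexp ((m * x - m ^ 2 / 2) / v))) := by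
  rw [gaussianReal_of_var_ne_zero _ hv, gaussianReal_of_var_ne_zero _ hv,
    ← withDensity_mul _ (measurable_gaussianPDF 0 v)
      (by fun_prop : Measurable fun x => ENNReal.ofReal (rexp ((m * x - m ^ 2 / 2) / v)))]
  congr 1
  ext x
  have hvpos : (0:ℝ) < (v:ℝ) := by positivity
  simp only [Pi.mul_apply, gaussianPDF, ← ENNReal.ofReal_mul (gaussianPDFReal_nonneg 0 v x)]
  congr 1
  rw [gaussianPDFReal_def, gaussianPDFReal_def]
  simp only []
  have hexp : rexp (-(x - m)^2/(2*(v:ℝ))) = rexp (-(x-0)^2/(2*(v:ℝ))) * rexp ((m*x - m^2/2)/(v:ℝ)) := by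
    rw [← Real.exp_add]
    congr 1
    field_simp
    ring
  rw [hexp]
  ring

lemma gaussianPDFReal_conv {v₁ v₂ : ℝ≥0} (h₁ : v₁ ≠ 0) (h₂ : v₂ ≠ 0) (x u : ℝ) :
    gaussianPDFReal 0 v₁ u * gaussianPDFReal 0 v₂ (x - u)
      = gaussianPDFReal 0 (v₁ + v₂) x
        * gaussianPDFReal ((v₁ : ℝ) * x / ((v₁ : ℝ) + v₂)) (v₁ * v₂ / (v₁ + v₂)) u := by
  have hv₁ : (0:ℝ) < v₁ := by positivity
  have hv₂ : (0:ℝ) < v₂ := by positivity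
  have hv12 : (0:ℝ) < (v₁:ℝ) + v₂ := by linarith
  rw [gaussianPDFReal_def, gaussianPDFReal_def, gaussianPDFReal_def, gaussianPDFReal_def]
  simp only []
  have hcast : ((v₁ * v₂ / (v₁ + v₂) : ℝ≥0) : ℝ) = (v₁:ℝ) * v₂ / ((v₁:ℝ) + v₂) := by
    push_cast; ring
  have hcast2 : ((v₁ + v₂ : ℝ≥0) : ℝ) = (v₁:ℝ) + v₂ := by push_cast; ring
  rw [hcast, hcast2]
  have hconst : (√(2 * π * v₁))⁻¹ * (√(2 * π * v₂))⁻¹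
      = (√(2 * π * ((v₁:ℝ) + v₂)))⁻¹ * (√(2 * π * ((v₁:ℝ) * v₂ / ((v₁:ℝ) + v₂))))⁻¹ := by
    rw [← mul_inv, ← mul_inv, ← Real.sqrt_mul (by positivity), ← Real.sqrt_mul (by positivity)]
    congr 2
    field_simp
  have hexp : rexp (-(u - 0)^2 / (2 * (v₁:ℝ))) * rexp (-(x - u - 0)^2/(2 * (v₂:ℝ)))
      = rexp (-(x - 0)^2 / (2 * ((v₁:ℝ) + v₂)))
        * rexp (-(u - (v₁:ℝ) * x / ((v₁:ℝ) + v₂))^2 / (2 * ((v₁:ℝ) * v₂ / ((v₁:ℝ)+v₂)))) := by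
    rw [← Real.exp_add, ← Real.exp_add]
    congr 1
    field_simp
    ring
  calc (√(2 * π * v₁))⁻¹ * rexp (-(u - 0)^2 / (2 * v₁))
        * ((√(2 * π * v₂))⁻¹ * rexp (-(x - u - 0)^2 / (2 * v₂)))
      = (√(2 * π * v₁))⁻¹ * (√(2 * π * v₂))⁻¹
        * (rexp (-(u - 0)^2 / (2 * (v₁:ℝ))) * rexp (-(x - u - 0)^2/(2 * (v₂:ℝ)))) := by ring
    _ = _ := by rw [hconst, hexp]; ring

lemma gaussianReal_conv (v₁ v₂ : ℝ≥0) :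
    Measure.map (fun p : ℝ × ℝ => p.1 + p.2)
        ((gaussianReal 0 v₁).prod (gaussianReal 0 v₂))
      = gaussianReal 0 (v₁ + v₂) := by
  by_cases h₁ : v₁ = 0
  · subst h₁
    rw [gaussianReal_zero_var, Measure.dirac_prod, Measure.map_map (by fun_prop) (by fun_prop)]
    have he : ((fun p : ℝ × ℝ => p.1 + p.2) ∘ Prod.mk (0:ℝ)) = fun x : ℝ => 0 + x := rfl
    rw [he, gaussianReal_map_const_add (μ := 0) (v := v₂) 0]
    norm_num
  by_cases h₂ : v₂ = 0
  · subst h₂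
    rw [gaussianReal_zero_var, Measure.prod_dirac, Measure.map_map (by fun_prop) (by fun_prop)]
    have he : ((fun p : ℝ × ℝ => p.1 + p.2) ∘ (fun x : ℝ => (x, (0:ℝ)))) = fun x : ℝ => x + 0 := rfl
    rw [he, gaussianReal_map_add_const (μ := 0) (v := v₁) 0]
    norm_num
  have h₁₂ : v₁ + v₂ ≠ 0 := by simp [h₁]
  have hv' : v₁ * v₂ / (v₁ + v₂) ≠ 0 := by
    simp [div_eq_zero_iff, h₁, h₂, h₁₂]
  ext s hs
  rw [Measure.map_apply (by fun_prop) hs,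
    Measure.prod_apply (measurable_add hs)]
  have inner : ∀ u : ℝ, (gaussianReal 0 v₂) (Prod.mk u ⁻¹' ((fun p : ℝ × ℝ => p.1 + p.2) ⁻¹' s))
      = ∫⁻ x in s, ENNReal.ofReal (gaussianPDFReal 0 v₂ (x - u)) ∂volume := by
    intro u
    have : Prod.mk u ⁻¹' ((fun p : ℝ × ℝ => p.1 + p.2) ⁻¹' s) = (u + ·) ⁻¹' s := rfl
    rw [this, ← Measure.map_apply (by fun_prop) hs, gaussianReal_map_const_add,
      zero_add, gaussianReal_apply _ h₂]
    refine setLIntegral_congr_fun hs (fun x _ => ?_)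
    rw [gaussianPDF, gaussianPDFReal_sub, zero_add]
  simp_rw [inner]
  have hmeas_int : Measurable fun u => ∫⁻ x in s, ENNReal.ofReal (gaussianPDFReal 0 v₂ (x - u)) ∂volume := by
    apply Measurable.lintegral_prod_right
    exact (measurable_gaussianPDF 0 v₂).comp ((measurable_snd.sub measurable_fst))
  rw [gaussianReal_of_var_ne_zero _ h₁, lintegral_withDensity_eq_lintegral_mul _
    (measurable_gaussianPDF 0 v₁)
    (hmeas_int : Measurable fun u => ∫⁻ x in s, ENNReal.ofReal (gaussianPDFReal 0 v₂ (x - u)) ∂volume)]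
  have step1 : ∀ u : ℝ, gaussianPDF 0 v₁ u * ∫⁻ x in s, ENNReal.ofReal (gaussianPDFReal 0 v₂ (x - u)) ∂volume
      = ∫⁻ x in s, gaussianPDF 0 v₁ u * ENNReal.ofReal (gaussianPDFReal 0 v₂ (x - u)) ∂volume :=
    fun u => (lintegral_const_mul _ ((measurable_gaussianPDF 0 v₂).comp (measurable_sub_const u))).symm
  simp only [Pi.mul_apply]
  simp_rw [step1]
  rw [lintegral_lintegral_swap]
  swap
  · exact (((measurable_gaussianPDF 0 v₁).comp measurable_fst).mul
      ((measurable_gaussianPDF 0 v₂).comp (measurable_snd.sub measurable_fst))).aemeasurable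
  have step2 : ∀ x : ℝ, ∫⁻ u, gaussianPDF 0 v₁ u * ENNReal.ofReal (gaussianPDFReal 0 v₂ (x - u)) ∂volume
      = gaussianPDF 0 (v₁ + v₂) x := by
    intro x
    have e1 : ∀ u : ℝ, gaussianPDF 0 v₁ u * ENNReal.ofReal (gaussianPDFReal 0 v₂ (x - u))
        = gaussianPDF 0 (v₁ + v₂) x * gaussianPDF ((v₁:ℝ) * x / ((v₁:ℝ) + v₂)) (v₁ * v₂ / (v₁ + v₂)) u := by
      intro u
      rw [gaussianPDF, gaussianPDF, gaussianPDF,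
        ← ENNReal.ofReal_mul (gaussianPDFReal_nonneg _ _ _),
        ← ENNReal.ofReal_mul (gaussianPDFReal_nonneg _ _ _),
        gaussianPDFReal_conv h₁ h₂ x u]
    simp_rw [e1]
    rw [lintegral_const_mul _ (measurable_gaussianPDF _ _),
      lintegral_gaussianPDF_eq_one _ hv', mul_one]
  simp_rw [step2]
  rw [gaussianReal_apply _ h₁₂]

lemma map_linear_pi (v : ℝ≥0) : ∀ {n : ℕ} (a : Fin n → ℝ),
    Measure.map (fun x : Fin n → ℝ => ∑ i, a i * x i)
        (Measure.pi fun _ => gaussianReal 0 v)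
      = gaussianReal 0 ((∑ i, a i ^ 2).toNNReal * v) := by
  intro n
  induction n with
  | zero =>
    intro a
    simp only [Finset.univ_eq_empty, Finset.sum_empty, Real.toNNReal_zero, zero_mul,
      gaussianReal_zero_var]
    rw [Measure.map_const, measure_univ, one_smul]
  | succ n ih =>
    intro a
    have hmp := measurePreserving_piFinSuccAbove (fun _ : Fin (n+1) => gaussianReal 0 v) 0
    set e := MeasurableEquiv.piFinSuccAbove (fun _ : Fin (n+1) => ℝ) 0 with he
    have hsplit : (fun x : Fin (n+1) → ℝ => ∑ i, a i * x i)
        = (fun q : ℝ × ℝ => q.1 + q.2)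
          ∘ (Prod.map (fun t : ℝ => a 0 * t) (fun x2 : Fin n → ℝ => ∑ i : Fin n, a i.succ * x2 i))
          ∘ ⇑e := by
      funext x
      simp only [Function.comp_apply, Prod.map_apply]
      rw [Fin.sum_univ_succ]
      rfl
    have hgm : Measurable (fun x2 : Fin n → ℝ => ∑ i : Fin n, a i.succ * x2 i) := by fun_prop
    rw [hsplit, ← Function.comp_assoc,
      ← Measure.map_map (by fun_prop) e.measurable,
      ← Measure.map_map (by fun_prop) ((measurable_const_mul (a 0)).prodMap hgm),
      hmp.map_eq,
      ← Measure.map_prod_map _ _ (measurable_const_mul (a 0)) hgm,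
      gaussianReal_map_const_mul (a 0), mul_zero, ih (fun i => a i.succ),
      gaussianReal_conv]
    congr 1
    rw [Fin.sum_univ_succ, Real.toNNReal_add (sq_nonneg _)
      (Finset.sum_nonneg fun i _ => sq_nonneg _), add_mul]
    congr 2
    ext
    simp [Real.coe_toNNReal _ (sq_nonneg (a 0))]


lemma gaussianReal_scale {v : ℝ≥0} (hv : v ≠ 0) (c : ℝ) :
    gaussianReal 0 v (Set.Ici c) = gaussianReal 0 1 (Set.Ici (c / Real.sqrt v)) := by
  have hvpos : (0:ℝ) < v := by positivity
  have hsq : (0:ℝ) < Real.sqrt v := Real.sqrt_pos.mpr hvpos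
  have hmap : (gaussianReal 0 1).map (Real.sqrt v * ·) = gaussianReal 0 v := by
    rw [gaussianReal_map_const_mul]
    congr 1
    · ring
    · ext
      push_cast
      rw [Real.sq_sqrt hvpos.le]
      ring
  rw [← hmap, Measure.map_apply (by fun_prop) measurableSet_Ici]
  congr 1
  ext u
  simp only [Set.mem_preimage, Set.mem_Ici]
  rw [div_le_iff₀ hsq]
  constructor <;> intro h <;> linarith [mul_comm (Real.sqrt v) u]

lemma gaussianReal_one_Ici (a : ℝ) :
    gaussianReal 0 1 (Set.Ici a) = gaussianReal 0 1 (Set.Iic (-a)) := by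
  have hmap : (gaussianReal 0 1).map ((-1 : ℝ) * ·) = gaussianReal 0 1 := by
    rw [gaussianReal_map_const_mul]
    congr 1
    · ring
    · ext; push_cast; ring
  conv_lhs => rw [← hmap]
  rw [Measure.map_apply (by fun_prop) measurableSet_Ici]
  congr 1
  ext u
  simp only [Set.mem_preimage, Set.mem_Ici, Set.mem_Iic]
  constructor <;> intro h <;> linarith

lemma gaussianReal_Ici_toReal {v : ℝ≥0} (hv : v ≠ 0) (c : ℝ) :
    (gaussianReal 0 v (Set.Ici c)).toReal = stdGaussianCDF (-(c / Real.sqrt v)) := by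
  rw [gaussianReal_scale hv, gaussianReal_one_Ici]
  rfl

/-- With `h(δ) = P_{ζ ~ N(0,σ²I_d)}[F(δ+ζ) ≤ y]`, for `‖δ‖₂ ≤ B` with
`h(0), h(δ) ∈ (0,1)` we have `Φ⁻¹(h(δ)) ≤ Φ⁻¹(h(0)) + B/σ`; equivalently,
`P[F(δ+ζ) ≤ y] ≤ Φ(Φ⁻¹(P[F(ζ) ≤ y]) + B/σ)`. -/
theorem probit_tail_shift_bound
    (d : ℕ) (hd : 1 ≤ d) (σ : ℝ) (hσ : 0 < σ)
    (F : EuclideanSpace ℝ (Fin d) → ℝ) (hF : Measurable F) (y : ℝ)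
    (h : EuclideanSpace ℝ (Fin d) → ℝ)
    (hh : ∀ δ, h δ = ((gaussPi (Fin d) σ) {ζ | F (δ + ζ) ≤ y}).toReal)
    (B : ℝ) (hB : 0 ≤ B)
    (δ : EuclideanSpace ℝ (Fin d)) (hδ : ‖δ‖ ≤ B)
    (h0 : 0 < h 0 ∧ h 0 < 1) (hd' : 0 < h δ ∧ h δ < 1) :
    probit (h δ) ≤ probit (h 0) + B / σ ∧
      h δ ≤ stdGaussianCDF (probit (h 0) + B / σ) := by
  obtain ⟨h0pos, h0lt⟩ := h0
  obtain ⟨hdpos, hdlt⟩ := hd'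
  set v : ℝ≥0 := ⟨σ ^ 2, sq_nonneg σ⟩ with hvdef
  have hvσ : (v : ℝ) = σ ^ 2 := rfl
  have hv : v ≠ 0 := by
    intro h0'
    have : (v : ℝ) = 0 := by rw [h0']; rfl
    nlinarith [hvσ]
  set μ : Measure (Fin d → ℝ) := Measure.pi fun _ : Fin d => gaussianReal 0 v with hμdef
  set e := (MeasurableEquiv.toLp 2 (Fin d → ℝ)).symm with hedef
  set A : Set (Fin d → ℝ) := (fun x => F (e.symm x)) ⁻¹' Set.Iic y with hAdef
  have hA : MeasurableSet A := (hF.comp e.symm.measurable) measurableSet_Iic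
  -- h in terms of μ and A
  have hgauss : ∀ δ₀ : EuclideanSpace ℝ (Fin d),
      h δ₀ = ((μ.map (fun x : Fin d → ℝ => e δ₀ + x)) A).toReal := by
    intro δ₀
    have hadd : Measurable fun ζ : EuclideanSpace ℝ (Fin d) => δ₀ + ζ := by fun_prop
    have hs : MeasurableSet {ζ : EuclideanSpace ℝ (Fin d) | F (δ₀ + ζ) ≤ y} :=
      (hF.comp hadd) measurableSet_Iic
    rw [hh δ₀]
    congr 1
    rw [gaussPi, Measure.map_apply (MeasurableEquiv.toLp 2 (Fin d → ℝ)).measurable hs, Measure.map_apply (by fun_prop) hA]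
    rfl
  -- Φ(probit p) = p
  have hinv : ∀ p : ℝ, 0 < p → p < 1 → stdGaussianCDF (probit p) = p := fun p hp hp1 =>
    Function.invFun_eq (stdGaussianCDF_surj hp hp1)
  have hΦt : stdGaussianCDF (probit (h 0)) = h 0 := hinv _ h0pos h0lt
  -- translation of the product gaussian
  have hmap_trans : ∀ m : Fin d → ℝ,
      μ.map (fun x => m + x) = Measure.pi fun i => gaussianReal (m i) v := by
    intro m
    refine (Measure.pi_eq (μ := fun i => gaussianReal (m i) v) fun s hs => ?_).symm
    rw [Measure.map_apply (by fun_prop) (MeasurableSet.univ_pi hs)]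
    have hset : (fun x : Fin d → ℝ => m + x) ⁻¹' Set.univ.pi s
        = Set.univ.pi fun i => (m i + ·) ⁻¹' s i := by
      ext x; simp [Set.mem_pi]
    rw [hset, Measure.pi_pi]
    refine Finset.prod_congr rfl fun i _ => ?_
    rw [← Measure.map_apply (by fun_prop) (hs i), gaussianReal_map_const_add, zero_add]
  -- density of the translated measure
  set ρfun : (Fin d → ℝ) → (Fin d → ℝ) → ℝ≥0∞ := fun m x =>
    ∏ i, ENNReal.ofReal (rexp ((m i * x i - m i ^ 2 / 2) / (v : ℝ))) with hρdef
  have hdensity : ∀ m : Fin d → ℝ,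
      Measure.pi (fun i => gaussianReal (m i) v) = μ.withDensity (ρfun m) := by
    intro m
    have hf : ∀ i : Fin d,
        Measurable fun x : ℝ => ENNReal.ofReal (rexp ((m i * x - m i ^ 2 / 2) / (v : ℝ))) :=
      fun i => by fun_prop
    haveI : ∀ i : Fin d, SigmaFinite ((gaussianReal 0 v).withDensity
        (fun x : ℝ => ENNReal.ofReal (rexp ((m i * x - m i ^ 2 / 2) / (v : ℝ))))) := fun i => by
      rw [← gaussianReal_tilt (m i) hv]; infer_instance
    calc Measure.pi (fun i => gaussianReal (m i) v)
        = Measure.pi (fun i => (gaussianReal 0 v).withDensity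
            (fun x : ℝ => ENNReal.ofReal (rexp ((m i * x - m i ^ 2 / 2) / (v : ℝ))))) := by
          exact congrArg Measure.pi (funext fun i => gaussianReal_tilt (m i) hv)
      _ = μ.withDensity (ρfun m) :=
          pi_withDensity (fun _ : Fin d => gaussianReal 0 v)
            (fun i x => ENNReal.ofReal (rexp ((m i * x - m i ^ 2 / 2) / (v : ℝ)))) hf
  -- dispose of the trivial case δ = 0
  by_cases hδ0 : δ = 0
  · subst hδ0
    have hBσ : 0 ≤ B / σ := div_nonneg hB hσ.le
    refine ⟨by linarith, ?_⟩
    calc h 0 = stdGaussianCDF (probit (h 0)) := hΦt.symm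
      _ ≤ stdGaussianCDF (probit (h 0) + B / σ) :=
        monotone_stdGaussianCDF (by linarith)
  -- main case
  have hN : 0 < ‖δ‖ := norm_pos_iff.mpr hδ0
  set a : Fin d → ℝ := ⇑e δ with hadef
  set V : ℝ := ∑ i, a i ^ 2 with hVdef
  have hNV : ‖δ‖ = Real.sqrt V := by
    rw [EuclideanSpace.norm_eq]
    congr 1
    exact Finset.sum_congr rfl fun i _ => by rw [Real.norm_eq_abs, sq_abs]; rfl
  have hV : 0 < V := by
    have := Real.sq_sqrt (Finset.sum_nonneg fun i (_ : i ∈ Finset.univ) => sq_nonneg (a i))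
    nlinarith [hNV, hN]
  have hVN : V = ‖δ‖ ^ 2 := by
    rw [hNV, Real.sq_sqrt hV.le]
  set W : ℝ≥0 := V.toNNReal * v with hWdef
  have hWr : (W : ℝ) = V * σ ^ 2 := by
    rw [hWdef, NNReal.coe_mul, Real.coe_toNNReal _ hV.le, hvσ]
  have hWne : W ≠ 0 := by
    intro h0'
    have : (W : ℝ) = 0 := by rw [h0']; rfl
    have hpos : 0 < V * σ ^ 2 := by positivity
    linarith [hWr]
  have hsqrtW : Real.sqrt W = ‖δ‖ * σ := by
    rw [hWr, hVN, Real.sqrt_mul (sq_nonneg _), Real.sqrt_sq hN.le, Real.sqrt_sq hσ.le]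
  set t : ℝ := probit (h 0) with htdef
  set c : ℝ := -(t * (‖δ‖ * σ)) with hcdef
  set L : (Fin d → ℝ) → ℝ := fun x => ∑ i, a i * x i with hLdef
  have hL : Measurable L := by fun_prop
  set H : Set (Fin d → ℝ) := L ⁻¹' Set.Ici c with hHdef
  have hH : MeasurableSet H := hL measurableSet_Ici
  have hlaw : μ.map L = gaussianReal 0 W := map_linear_pi v a
  have hμH : (μ H).toReal = h 0 := by
    have : μ H = gaussianReal 0 W (Set.Ici c) := by
      rw [← hlaw, Measure.map_apply hL measurableSet_Ici]
    rw [this, gaussianReal_Ici_toReal hWne, hsqrtW]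
    have harg : -(c / (‖δ‖ * σ)) = t := by
      rw [hcdef]
      field_simp
    rw [harg]
    exact hΦt
  have hμA : (μ A).toReal = h 0 := by
    have := hgauss 0
    have he0 : (fun x : Fin d → ℝ => e 0 + x) = id := by
      funext x
      show e 0 + x = x
      have : e 0 = (0 : Fin d → ℝ) := rfl
      rw [this, zero_add]
    rw [he0, Measure.map_id] at this
    exact this.symm
  have hAHμ : μ A = μ H :=
    (ENNReal.toReal_eq_toReal_iff' (measure_ne_top μ A) (measure_ne_top μ H)).mp
      (hμA.trans hμH.symm)
  -- the tilted measure ν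
  set ν : Measure (Fin d → ℝ) := μ.withDensity (ρfun a) with hνdef
  have hν : μ.map (fun x => a + x) = ν := (hmap_trans a).trans (hdensity a)
  haveI : IsProbabilityMeasure (μ.map (fun x : Fin d → ℝ => a + x)) :=
    Measure.isProbabilityMeasure_map (by fun_prop)
  haveI hνprob : IsProbabilityMeasure ν := by rw [← hν]; infer_instance
  have hρ_eq : ∀ x, ρfun a x = ENNReal.ofReal (rexp ((L x - V / 2) / (v : ℝ))) := by
    intro x
    rw [hρdef]
    simp only []
    rw [← ENNReal.ofReal_prod_of_nonneg (fun i _ => (Real.exp_pos _).le), ← Real.exp_sum]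
    congr 1
    rw [← Finset.sum_div]
    congr 1
    rw [Finset.sum_sub_distrib, ← Finset.sum_div]
  have hρm : Measurable (ρfun a) := by
    refine Finset.measurable_prod _ fun i _ => ?_
    fun_prop
  set k : ℝ≥0∞ := ENNReal.ofReal (rexp ((c - V / 2) / (v : ℝ))) with hkdef
  have hvpos : (0:ℝ) < (v:ℝ) := by rw [hvσ]; positivity
  have bound_le : ∀ x ∉ H, ρfun a x ≤ k := by
    intro x hx
    rw [hρ_eq]
    refine ENNReal.ofReal_le_ofReal (Real.exp_le_exp.mpr ?_)
    have : L x < c := lt_of_not_ge hx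
    gcongr
  have bound_ge : ∀ x ∈ H, k ≤ ρfun a x := by
    intro x hx
    rw [hρ_eq]
    refine ENNReal.ofReal_le_ofReal (Real.exp_le_exp.mpr ?_)
    have : c ≤ L x := hx
    gcongr
  -- Neyman-Pearson comparison
  have hdiff : μ (A \ H) = μ (H \ A) := by
    have h1 : μ (A ∩ H) + μ (A \ H) = μ A := measure_inter_add_diff A hH
    have h2 : μ (H ∩ A) + μ (H \ A) = μ H := measure_inter_add_diff H hA
    rw [Set.inter_comm] at h2
    have : μ (A ∩ H) + μ (A \ H) = μ (A ∩ H) + μ (H \ A) := by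
      rw [h1, h2, hAHμ]
    exact (ENNReal.add_right_inj (measure_ne_top μ _)).mp this
  have key : ν A ≤ ν H := by
    have b1 : ν (A \ H) ≤ k * μ (A \ H) := by
      rw [hνdef, withDensity_apply _ (hA.diff hH)]
      calc ∫⁻ x in A \ H, ρfun a x ∂μ ≤ ∫⁻ _ in A \ H, k ∂μ :=
          setLIntegral_mono measurable_const fun x hx => bound_le x hx.2
        _ = k * μ (A \ H) := setLIntegral_const _ _
    have b2 : k * μ (H \ A) ≤ ν (H \ A) := by
      rw [hνdef, withDensity_apply _ (hH.diff hA)]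
      calc k * μ (H \ A) = ∫⁻ _ in H \ A, k ∂μ := (setLIntegral_const _ _).symm
        _ ≤ ∫⁻ x in H \ A, ρfun a x ∂μ :=
          setLIntegral_mono hρm fun x hx => bound_ge x hx.1
    calc ν A = ν (A ∩ H) + ν (A \ H) := (measure_inter_add_diff A hH).symm
      _ ≤ ν (A ∩ H) + k * μ (A \ H) := add_le_add le_rfl b1
      _ = ν (A ∩ H) + k * μ (H \ A) := by rw [hdiff]
      _ ≤ ν (A ∩ H) + ν (H \ A) := add_le_add le_rfl b2
      _ = ν (H ∩ A) + ν (H \ A) := by rw [Set.inter_comm]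
      _ = ν H := measure_inter_add_diff H hA
  -- compute ν H
  have hνH : (ν H).toReal = stdGaussianCDF (t + ‖δ‖ / σ) := by
    rw [← hν, Measure.map_apply (by fun_prop) hH]
    have hset : (fun x : Fin d → ℝ => a + x) ⁻¹' H = L ⁻¹' Set.Ici (c - V) := by
      ext x
      have hLax : L (a + x) = V + L x := by
        rw [hLdef, hVdef]
        simp only []
        rw [← Finset.sum_add_distrib]
        refine Finset.sum_congr rfl fun i _ => ?_
        show a i * (a i + x i) = a i ^ 2 + a i * x i
        ring
      simp only [Set.mem_preimage, hHdef, Set.mem_Ici]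
      constructor <;> intro hm
      · have : c ≤ L (a + x) := hm
        rw [hLax] at this; linarith
      · show c ≤ L (a + x)
        rw [hLax]; linarith
    rw [hset, ← Measure.map_apply hL measurableSet_Ici, hlaw,
      gaussianReal_Ici_toReal hWne, hsqrtW]
    congr 1
    rw [hcdef, hVN]
    field_simp
    ring
  -- conclude
  have hfinal : h δ ≤ stdGaussianCDF (t + B / σ) := by
    have h1 : h δ = (ν A).toReal := by rw [hgauss δ, hν]
    have h2 : h δ ≤ (ν H).toReal := by
      rw [h1]
      exact ENNReal.toReal_mono (measure_ne_top ν H) key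
    have h3 : stdGaussianCDF (t + ‖δ‖ / σ) ≤ stdGaussianCDF (t + B / σ) :=
      monotone_stdGaussianCDF (by gcongr)
    calc h δ ≤ (ν H).toReal := h2
      _ = stdGaussianCDF (t + ‖δ‖ / σ) := hνH
      _ ≤ stdGaussianCDF (t + B / σ) := h3
  refine ⟨?_, hfinal⟩
  have h5 : stdGaussianCDF (probit (h δ)) = h δ := hinv _ hdpos hdlt
  have : stdGaussianCDF (probit (h δ)) ≤ stdGaussianCDF (t + B / σ) := by
    rw [h5]; exact hfinal
  exact (strictMono_stdGaussianCDF.le_iff_le).mp this
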